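/- Let μ > 0, σ > 0, r > 0, c̄ ∈ (0, μ] with 2μc̄ > σ²r, and let γ be the positive root of -(1/2)σ²y² + (μ - c̄)y + r = 0. Then σ²γ - μ + c̄ > 0, and the function u(x) = (1/r)(e^{-γx} - 1) + (γc̄/(r(σ²γ - μ + c̄))) · x e^{-γx} satisfies the ODE -(1/2)σ²u''(x) - (μ - c̄)u'(x) + r u(x) = (c̄γ/r)e^{-γx} - 1 for all x ≥ 0, with u(0) = 0 and lim_{x→∞} u(x) = -1/r < 0. -/

import Mathlib

open Real Filter

theorem stmt_10 (μ σ r cbar γ : ℝ) (hμ : 0 < μ) (hσ : 0 < σ) (hr : 0 < r)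
    (hc0 : 0 < cbar) (hcμ : cbar ≤ μ) (hcomp : 2*μ*cbar > σ^2*r)
    (hγpos : 0 < γ) (hγroot : -(1/2)*σ^2*γ^2 + (μ - cbar)*γ + r = 0)
    (u : ℝ → ℝ)
    (hu : ∀ x, u x = (1/r) * (Real.exp (-γ*x) - 1)
      + (γ*cbar/(r*(σ^2*γ - μ + cbar))) * x * Real.exp (-γ*x)) :
    0 < σ^2*γ - μ + cbar
      ∧ (∀ x ≥ (0:ℝ),
          -(1/2)*σ^2 * deriv (deriv u) x - (μ - cbar) * deriv u x + r * u x
            = (cbar*γ/r) * Real.exp (-γ*x) - 1)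
      ∧ u 0 = 0
      ∧ Filter.Tendsto u Filter.atTop (nhds (-1/r))
      ∧ -1/r < 0 := by
  have hueq : u = fun x => (1/r) * (Real.exp (-γ*x) - 1)
      + (γ*cbar/(r*(σ^2*γ - μ + cbar))) * x * Real.exp (-γ*x) := funext hu
  subst hueq
  have hD : 0 < σ^2*γ - μ + cbar := by nlinarith [sq_nonneg γ, hγpos.le]
  have hDne : σ^2*γ - μ + cbar ≠ 0 := ne_of_gt hD
  have hrne : r ≠ 0 := ne_of_gt hr
  set B : ℝ := γ*cbar/(r*(σ^2*γ - μ + cbar)) with hB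
  clear_value B
  have hE : ∀ x : ℝ, HasDerivAt (fun y => Real.exp (-γ*y)) (Real.exp (-γ*x) * (-γ)) x := by
    intro x
    have h1 : HasDerivAt (fun y : ℝ => -γ * y) (-γ) x := by
      simpa using (hasDerivAt_id x).const_mul (-γ)
    exact h1.exp
  have hU : ∀ x : ℝ, HasDerivAt
      (fun y => (1/r) * (Real.exp (-γ*y) - 1) + B * y * Real.exp (-γ*y))
      ((1/r) * (Real.exp (-γ*x) * (-γ)) + (B * Real.exp (-γ*x) + (B*x) * (Real.exp (-γ*x) * (-γ)))) x := by
    intro x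
    have h1 := (((hE x).sub_const 1).const_mul (1/r))
    have h2 : HasDerivAt (fun y : ℝ => B * y) B x := by
      simpa using (hasDerivAt_id x).const_mul B
    have h3 := h2.mul (hE x)
    exact (h1.add h3).congr_deriv (by ring)
  have hderiv : deriv (fun y => (1/r) * (Real.exp (-γ*y) - 1) + B * y * Real.exp (-γ*y))
      = fun x => (1/r) * (Real.exp (-γ*x) * (-γ)) + (B * Real.exp (-γ*x) + (B*x) * (Real.exp (-γ*x) * (-γ))) :=
    funext fun x => (hU x).deriv
  have hV : ∀ x : ℝ, HasDerivAt
      (fun y => (1/r) * (Real.exp (-γ*y) * (-γ)) + (B * Real.exp (-γ*y) + (B*y) * (Real.exp (-γ*y) * (-γ))))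
      ((1/r) * (Real.exp (-γ*x) * (-γ) * (-γ)) + (B * (Real.exp (-γ*x) * (-γ))
        + (B * (Real.exp (-γ*x) * (-γ)) + (B*x) * (Real.exp (-γ*x) * (-γ) * (-γ))))) x := by
    intro x
    have h1 := ((hE x).const_mul (1/r)).const_mul (-γ)
    have h2 := (hE x).const_mul B
    have h3 : HasDerivAt (fun y : ℝ => B * y) B x := by
      simpa using (hasDerivAt_id x).const_mul B
    have h4 := (h3.mul ((hE x).const_mul (-γ)))
    have := (h1.add (h2.add h4))
    refine (this.congr_deriv (by ring)).congr_of_eventuallyEq (Filter.Eventually.of_forall fun y => ?_)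
    simp only [Pi.add_apply, Pi.mul_apply]; ring
  have hderiv2 : deriv (deriv (fun y => (1/r) * (Real.exp (-γ*y) - 1) + B * y * Real.exp (-γ*y)))
      = fun x => (1/r) * (Real.exp (-γ*x) * (-γ) * (-γ)) + (B * (Real.exp (-γ*x) * (-γ))
        + (B * (Real.exp (-γ*x) * (-γ)) + (B*x) * (Real.exp (-γ*x) * (-γ) * (-γ)))) := by
    rw [hderiv]
    exact funext fun x => (hV x).deriv
  refine ⟨hD, ?_, ?_, ?_, ?_⟩
  · intro x _
    rw [hderiv2, hderiv]
    have hBD : B*(σ^2*γ - μ + cbar) = γ*cbar/r := by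
      rw [hB, div_mul_eq_mul_div, div_eq_div_iff (mul_ne_zero hrne hDne) hrne]; ring
    beta_reduce
    set E := Real.exp (-γ*x) with hEdef
    have hrinv : r * r⁻¹ = 1 := mul_inv_cancel₀ hrne
    linear_combination (E/r + B*x*E) * hγroot + E*hBD - hrinv
  · norm_num
  · have h1 : Tendsto (fun x : ℝ => Real.exp (-γ*x)) atTop (nhds 0) := by
      have : Tendsto (fun x : ℝ => γ * x) atTop atTop :=
        Tendsto.const_mul_atTop hγpos tendsto_id
      simpa [Function.comp_def, neg_mul] using Real.tendsto_exp_neg_atTop_nhds_zero.comp this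
    have h2 : Tendsto (fun x : ℝ => x * Real.exp (-γ*x)) atTop (nhds 0) := by
      have hγx : Tendsto (fun x : ℝ => γ * x) atTop atTop :=
        Tendsto.const_mul_atTop hγpos tendsto_id
      have hbase : Tendsto (fun y : ℝ => y * Real.exp (-y)) atTop (nhds 0) := by
        simpa using Real.tendsto_pow_mul_exp_neg_atTop_nhds_zero 1
      have h3 : Tendsto (fun x : ℝ => (γ*x) * Real.exp (-(γ*x))) atTop (nhds 0) := by
        simpa [Function.comp_def] using hbase.comp hγx
      have h4 := h3.const_mul (1/γ)
      simp only [mul_zero] at h4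
      have hne : γ ≠ 0 := ne_of_gt hγpos
      convert h4 using 2 with x
      field_simp
    have hlim : Tendsto (fun x : ℝ => (1/r) * (Real.exp (-γ*x) - 1) + B * x * Real.exp (-γ*x))
        atTop (nhds ((1/r) * (0 - 1) + B * 0)) := by
      exact ((h1.sub_const 1).const_mul (1/r)).add (by simpa [mul_assoc] using h2.const_mul B)
    have hval : (1/r) * (0 - 1) + B * 0 = -1/r := by ring
    rw [hval] at hlim
    exact hlim
  · exact div_neg_of_neg_of_pos (by norm_num) hr
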